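/- arXiv:2104.11923 — 4 statements merged into one kernel-verified Lean document; each statement's English description precedes it below -/
import Mathlib

section
/- Let ε ≥ 0 and let ρ₀, ρ₁ be positive definite density matrices in M_n(ℂ). For every HJB_ε subsolution A and every pair (ρ,V) ∈ CE_ε(ρ₀,ρ₁), one has τ(A(1)ρ₁ − A(0)ρ₀) ≤ ½ ∫₀¹ ⟨V(t), [ρ(t)]_ω⁻¹ V(t)⟩ dt. Consequently sup_{A ∈ HJB_ε} τ(A(1)ρ₁ − A(0)ρ₀) ≤ ½·W_ε²(ρ₀,ρ₁). -/
open MeasureTheory Matrix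
open scoped ENNReal Classical ComplexOrder

/-- Normalized trace `τ(A) = Tr(A)/n` on `M_n(ℂ)`. -/
noncomputable def tau {N : Type*} [Fintype N] (A : Matrix N N ℂ) : ℂ :=
  A.trace / (Fintype.card N)

/-- GNS inner product `⟨A,B⟩ = τ(A* B)`, conjugate-linear in the first argument. -/
noncomputable def gns {N : Type*} [Fintype N] (A B : Matrix N N ℂ) : ℂ := tau (Aᴴ * B)

/-- Fractional power `X^s` of a positive semidefinite matrix via functional calculus
(junk value `0` if `X` is not hermitian). -/
noncomputable def mpow {N : Type*} [Fintype N] [DecidableEq N] (X : Matrix N N ℂ) (s : ℝ) :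
    Matrix N N ℂ :=
  if hX : X.IsHermitian then
    (Matrix.IsHermitian.eigenvectorUnitary hX : Matrix N N ℂ) *
      Matrix.diagonal (fun i => ((hX.eigenvalues i ^ s : ℝ) : ℂ)) *
      (star (Matrix.IsHermitian.eigenvectorUnitary hX : Matrix N N ℂ))
  else 0

/-- The operator `[X]_α(A) = ∫₀¹ e^{α(s-1/2)} X^s A X^{1-s} ds` on `M_n(ℂ)`. -/
noncomputable def sandwich {N : Type*} [Fintype N] [DecidableEq N] (X : Matrix N N ℂ) (α : ℝ)
    (A : Matrix N N ℂ) : Matrix N N ℂ :=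
  Matrix.of fun i k =>
    ∫ s in (0:ℝ)..1, Real.exp (α * (s - 1/2)) • ((mpow X s * A * mpow X (1 - s)) i k)

section H

variable {N : Type*} [Fintype N] [DecidableEq N] {J : Type*} [Fintype J]

/-- Inner product on `H = ⊕_{j ∈ J} M_n(ℂ)`. -/
noncomputable def gnsH (V W : J → Matrix N N ℂ) : ℂ := ∑ j, gns (V j) (W j)

/-- The operator `[ρ]_ω = ⊕_j [ρ]_{ω_j}` on `H`. -/
noncomputable def opOmega (ω : J → ℝ) (ρ : Matrix N N ℂ) (W : J → Matrix N N ℂ) :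
    J → Matrix N N ℂ :=
  fun j => sandwich ρ (ω j) (W j)

/-- Extended value `⟨V, K⁻¹ V⟩ ∈ [0,∞]`: equals `⟨W, K W⟩` if `V = K W` with
`W ⊥ ker K`, and `∞` if `V ∉ ran K`. -/
noncomputable def invQuadH (K : (J → Matrix N N ℂ) → (J → Matrix N N ℂ))
    (V : J → Matrix N N ℂ) : ℝ≥0∞ :=
  if h : ∃ W, K W = V ∧ ∀ U, K U = 0 → gnsH W U = 0
  then ENNReal.ofReal (gnsH h.choose (K h.choose)).re
  else ⊤

/-- The partial derivative `∂_j A = [V_j, A]`; `gradD V A = ∇A`. -/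
noncomputable def gradD (Vf : J → Matrix N N ℂ) (A : Matrix N N ℂ) : J → Matrix N N ℂ :=
  fun j => Vf j * A - A * Vf j

/-- The Lindblad generator `L(A) = ∑_j (e^{-ω_j/2} V_j^*[A,V_j] - e^{ω_j/2}[A,V_j]V_j^*)`. -/
noncomputable def genL (Vf : J → Matrix N N ℂ) (ω : J → ℝ) (A : Matrix N N ℂ) :
    Matrix N N ℂ :=
  ∑ j, (Real.exp (-ω j / 2) • ((Vf j)ᴴ * (A * Vf j - Vf j * A)) -
        Real.exp (ω j / 2) • ((A * Vf j - Vf j * A) * (Vf j)ᴴ))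

/-- Membership in `CE_ε(ρ₀,ρ₁)`: `ρ` is a C¹ curve of invertible density matrices joining
`ρ₀` to `ρ₁`, `Vc` is continuous, and the continuity equation
`ρ'(t) + div Vc(t) = ε L†ρ(t)` holds on `[0,1]`. -/
def IsCE (dvg : (J → Matrix N N ℂ) → Matrix N N ℂ) (Ldag : Matrix N N ℂ → Matrix N N ℂ)
    (ε : ℝ) (ρ₀ ρ₁ : Matrix N N ℂ) (ρ : ℝ → Matrix N N ℂ) (Vc : ℝ → J → Matrix N N ℂ) :
    Prop :=
  ρ 0 = ρ₀ ∧ ρ 1 = ρ₁ ∧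
  (∀ t ∈ Set.Icc (0:ℝ) 1, (ρ t).PosDef ∧ tau (ρ t) = 1) ∧
  (∀ j i k, ContinuousOn (fun t => Vc t j i k) (Set.Icc (0:ℝ) 1)) ∧
  ∃ ρ' : ℝ → Matrix N N ℂ,
    (∀ t ∈ Set.Icc (0:ℝ) 1, ∀ i k, HasDerivAt (fun s => ρ s i k) (ρ' t i k) t) ∧
    (∀ i k, ContinuousOn (fun t => ρ' t i k) (Set.Icc (0:ℝ) 1)) ∧
    (∀ t ∈ Set.Icc (0:ℝ) 1, ρ' t + dvg (Vc t) = ε • Ldag (ρ t))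

/-- The squared entropic transport distance `W_ε²(ρ₀,ρ₁)`. -/
noncomputable def Wsq (ω : J → ℝ) (dvg : (J → Matrix N N ℂ) → Matrix N N ℂ)
    (Ldag : Matrix N N ℂ → Matrix N N ℂ) (ε : ℝ) (ρ₀ ρ₁ : Matrix N N ℂ) : ℝ≥0∞ :=
  ⨅ (ρ : ℝ → Matrix N N ℂ) (Vc : ℝ → J → Matrix N N ℂ)
    (_ : IsCE dvg Ldag ε ρ₀ ρ₁ ρ Vc),
      ∫⁻ t in Set.Icc (0:ℝ) 1, invQuadH (opOmega ω (ρ t)) (Vc t)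

/-- Hamilton–Jacobi–Bellmann subsolutions: `A` is a C¹ curve of hermitian matrices with
`τ((Ȧ(t) + ε L A(t))ρ) + ½⟨∇A(t), [ρ]_ω ∇A(t)⟩ ≤ 0` for all `t ∈ [0,1]` and all
density matrices `ρ`.  (`A'` records the derivative of `A`.) -/
noncomputable def IsHJB (Vf : J → Matrix N N ℂ) (ω : J → ℝ) (ε : ℝ)
    (A A' : ℝ → Matrix N N ℂ) : Prop :=
  (∀ t ∈ Set.Icc (0:ℝ) 1, (A t).IsHermitian) ∧
  (∀ t ∈ Set.Icc (0:ℝ) 1, ∀ i k, HasDerivAt (fun s => A s i k) (A' t i k) t) ∧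
  (∀ i k, ContinuousOn (fun t => A' t i k) (Set.Icc (0:ℝ) 1)) ∧
  ∀ t ∈ Set.Icc (0:ℝ) 1, ∀ ρ : Matrix N N ℂ, ρ.PosSemidef → tau ρ = 1 →
    (tau ((A' t + ε • genL Vf ω (A t)) * ρ)).re
      + (1/2) * (gnsH (gradD Vf (A t)) (opOmega ω ρ (gradD Vf (A t)))).re ≤ 0

end H

set_option linter.unusedSectionVars false
set_option maxHeartbeats 1000000

namespace HJBAux
section
variable {N : Type*} [Fintype N] [DecidableEq N] {J : Type*} [Fintype J]

lemma tau_add (A B : Matrix N N ℂ) : tau (A + B) = tau A + tau B := by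
  simp [tau, Matrix.trace_add, add_div]

lemma tau_sub (A B : Matrix N N ℂ) : tau (A - B) = tau A - tau B := by
  simp [tau, Matrix.trace_sub, sub_div]

lemma tau_smul (r : ℝ) (A : Matrix N N ℂ) : tau (r • A) = r • tau A := by
  simp [tau, Matrix.trace_smul, Complex.real_smul, mul_div_assoc]

lemma tau_mul_comm (A B : Matrix N N ℂ) : tau (A * B) = tau (B * A) := by
  simp [tau, Matrix.trace_mul_comm A B]

lemma tau_conjT (A : Matrix N N ℂ) : tau Aᴴ = starRingEnd ℂ (tau A) := by
  simp [tau, Matrix.trace_conjTranspose, map_div₀]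

lemma gns_conj (A B : Matrix N N ℂ) : gns A B = starRingEnd ℂ (gns B A) := by
  rw [gns, gns, ← tau_conjT, Matrix.conjTranspose_mul, Matrix.conjTranspose_conjTranspose]

lemma tau_herm_mul {A : Matrix N N ℂ} (hA : Aᴴ = A) (M : Matrix N N ℂ) :
    tau (A * M) = starRingEnd ℂ (gns M A) := by
  rw [gns, ← tau_conjT, Matrix.conjTranspose_mul, Matrix.conjTranspose_conjTranspose, hA]

lemma tau_re (A : Matrix N N ℂ) : (tau A).re = (Fintype.card N : ℝ)⁻¹ * A.trace.re := by
  rw [tau, div_eq_inv_mul]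
  rw [show ((Fintype.card N : ℂ))⁻¹ = (((Fintype.card N : ℝ)⁻¹ : ℝ) : ℂ) by push_cast; ring]
  exact Complex.re_ofReal_mul _ _

lemma tau_mul_self_re_nonneg (M : Matrix N N ℂ) : 0 ≤ (tau (Mᴴ * M)).re := by
  rw [tau_re]
  apply mul_nonneg (by positivity)
  have : (Mᴴ * M).trace = ∑ i, ∑ k, (starRingEnd ℂ (M k i)) * M k i := by
    simp [Matrix.trace, Matrix.mul_apply, Matrix.conjTranspose_apply]
  rw [this]
  rw [Complex.re_sum]
  refine Finset.sum_nonneg fun i _ => ?_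
  rw [Complex.re_sum]
  refine Finset.sum_nonneg fun k _ => ?_
  rw [mul_comm, Complex.mul_conj]
  simp [Complex.normSq_nonneg]

lemma mpow_herm {X : Matrix N N ℂ} (hX : X.IsHermitian) (s : ℝ) : (mpow X s)ᴴ = mpow X s := by
  rw [mpow, dif_pos hX]
  simp [Matrix.conjTranspose_mul, Matrix.diagonal_conjTranspose, mul_assoc,
    Matrix.star_eq_conjTranspose, Pi.star_def, Complex.star_def, Complex.conj_ofReal]

lemma mpow_mul {X : Matrix N N ℂ} (hX : X.PosDef) (a b : ℝ) :
    mpow X a * mpow X b = mpow X (a + b) := by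
  simp only [mpow, dif_pos hX.1]
  set U := (Matrix.IsHermitian.eigenvectorUnitary hX.1 : Matrix N N ℂ) with hU
  have h1 : star U * U = 1 :=
    Matrix.mem_unitaryGroup_iff'.mp (Matrix.IsHermitian.eigenvectorUnitary hX.1).2
  have h2 : star U * (U * (Matrix.diagonal (fun i => ((hX.1.eigenvalues i ^ b : ℝ) : ℂ)) * star U))
      = Matrix.diagonal (fun i => ((hX.1.eigenvalues i ^ b : ℝ) : ℂ)) * star U := by
    rw [← mul_assoc, h1, one_mul]
  simp only [mul_assoc, h2]
  rw [← mul_assoc (Matrix.diagonal _) (Matrix.diagonal _), Matrix.diagonal_mul_diagonal]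
  have h3 : (fun i => ((hX.1.eigenvalues i ^ a : ℝ) : ℂ) * ((hX.1.eigenvalues i ^ b : ℝ) : ℂ))
      = fun i => ((hX.1.eigenvalues i ^ (a + b) : ℝ) : ℂ) := by
    funext i
    rw [← Complex.ofReal_mul, ← Real.rpow_add (hX.eigenvalues_pos i)]
  rw [h3]

lemma mpow_continuous {X : Matrix N N ℂ} (hX : X.PosDef) (i k : N) :
    Continuous fun s => mpow X s i k := by
  simp only [mpow, dif_pos hX.1, Matrix.mul_apply, Matrix.diagonal_apply, ite_mul, zero_mul,
    mul_ite, mul_zero, Finset.sum_ite_eq, Finset.sum_ite_eq', Finset.mem_univ, if_true]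
  refine continuous_finset_sum _ fun b _ => ?_
  refine Continuous.mul (Continuous.mul continuous_const ?_) continuous_const
  have : (fun s : ℝ => ((hX.1.eigenvalues b ^ s : ℝ) : ℂ))
      = fun s => ((Real.exp (Real.log (hX.1.eigenvalues b) * s) : ℝ) : ℂ) := by
    funext s
    rw [Real.rpow_def_of_pos (hX.eigenvalues_pos b)]
  rw [this]
  exact Complex.continuous_ofReal.comp
    (Real.continuous_exp.comp (continuous_const.mul continuous_id))

lemma contEntry {X : Matrix N N ℂ} (hX : X.PosDef) (B : Matrix N N ℂ) (i k : N) :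
    Continuous fun s => (mpow X s * B * mpow X (1 - s)) i k := by
  simp only [Matrix.mul_apply]
  refine continuous_finset_sum _ fun a _ => Continuous.mul ?_ ?_
  · exact continuous_finset_sum _ fun b _ => (mpow_continuous hX i b).mul continuous_const
  · exact (mpow_continuous hX a k).comp (continuous_const.sub continuous_id)

lemma contExp (α : ℝ) : Continuous fun s : ℝ => Real.exp (α * (s - 1/2)) :=
  Real.continuous_exp.comp (continuous_const.mul (continuous_id.sub continuous_const))

lemma contIntegrand {X : Matrix N N ℂ} (hX : X.PosDef) (α : ℝ) (B : Matrix N N ℂ) (i k : N) :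
    Continuous fun s => Real.exp (α * (s - 1/2)) • ((mpow X s * B * mpow X (1 - s)) i k) :=
  (contExp α).smul (contEntry hX B i k)

lemma contTau {X : Matrix N N ℂ} (hX : X.PosDef) (A B : Matrix N N ℂ) :
    Continuous fun s => tau (Aᴴ * (mpow X s * B * mpow X (1 - s))) := by
  simp only [tau, Matrix.trace, Matrix.diag, Matrix.mul_apply]
  refine Continuous.div_const (continuous_finset_sum _ fun i _ =>
    continuous_finset_sum _ fun k _ => continuous_const.mul
      (continuous_finset_sum _ fun a _ => Continuous.mul
        (continuous_finset_sum _ fun b _ => (mpow_continuous hX k b).mul continuous_const)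
        ((mpow_continuous hX a i).comp (continuous_const.sub continuous_id)))) _

lemma gns_sandwich {X : Matrix N N ℂ} (hX : X.PosDef) (α : ℝ) (A B : Matrix N N ℂ) :
    gns A (sandwich X α B) =
      ∫ s in (0:ℝ)..1, Real.exp (α * (s - 1/2)) • tau (Aᴴ * (mpow X s * B * mpow X (1 - s))) := by
  rw [gns, tau]
  have htr : (Aᴴ * sandwich X α B).trace
      = ∫ s in (0:ℝ)..1,
          Real.exp (α * (s - 1/2)) • (Aᴴ * (mpow X s * B * mpow X (1 - s))).trace := by
    calc (Aᴴ * sandwich X α B).trace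
        = ∑ i, ∑ k, Aᴴ i k *
            ∫ s in (0:ℝ)..1, Real.exp (α * (s - 1/2)) • ((mpow X s * B * mpow X (1 - s)) k i) := by
          simp [Matrix.trace, Matrix.diag, Matrix.mul_apply, sandwich]
      _ = ∑ i, ∑ k, ∫ s in (0:ℝ)..1,
            Aᴴ i k * (Real.exp (α * (s - 1/2)) • ((mpow X s * B * mpow X (1 - s)) k i)) := by
          simp [intervalIntegral.integral_const_mul]
      _ = ∫ s in (0:ℝ)..1, ∑ i, ∑ k,
            Aᴴ i k * (Real.exp (α * (s - 1/2)) • ((mpow X s * B * mpow X (1 - s)) k i)) := by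
          rw [intervalIntegral.integral_finset_sum fun i _ =>
            ((continuous_finset_sum _ fun k _ =>
              (continuous_const : Continuous fun _ : ℝ => Aᴴ i k).fun_mul (contIntegrand hX α B k i)).intervalIntegrable 0 1)]
          exact Finset.sum_congr rfl fun i _ =>
            (intervalIntegral.integral_finset_sum fun k _ =>
              (((continuous_const : Continuous fun _ : ℝ => Aᴴ i k).fun_mul (contIntegrand hX α B k i)).intervalIntegrable 0 1)).symm
      _ = ∫ s in (0:ℝ)..1,
            Real.exp (α * (s - 1/2)) • (Aᴴ * (mpow X s * B * mpow X (1 - s))).trace := by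
          refine intervalIntegral.integral_congr fun s _ => ?_
          simp only [Matrix.trace, Matrix.diag, Matrix.mul_apply, Finset.smul_sum]
          refine Finset.sum_congr rfl fun i _ => Finset.sum_congr rfl fun k _ => ?_
          rw [← Finset.smul_sum, mul_smul_comm]
  rw [htr, ← intervalIntegral.integral_div]
  refine intervalIntegral.integral_congr fun s _ => ?_
  rw [tau, smul_div_assoc]

lemma contTauIntegrand {X : Matrix N N ℂ} (hX : X.PosDef) (α : ℝ) (A B : Matrix N N ℂ) :
    Continuous fun s =>
      Real.exp (α * (s - 1/2)) • tau (Aᴴ * (mpow X s * B * mpow X (1 - s))) :=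
  (contExp α).smul (contTau hX A B)

lemma gns_sandwich_symm {X : Matrix N N ℂ} (hX : X.PosDef) (α : ℝ) (A B : Matrix N N ℂ) :
    gns (sandwich X α A) B = gns A (sandwich X α B) := by
  rw [gns_conj, gns_sandwich hX, gns_sandwich hX]
  rw [intervalIntegral.integral_of_le zero_le_one, intervalIntegral.integral_of_le zero_le_one,
    ← integral_conj]
  refine integral_congr_ae (Filter.Eventually.of_forall fun s => ?_)
  dsimp only
  rw [Complex.real_smul, Complex.real_smul, _root_.map_mul, Complex.conj_ofReal, ← tau_conjT]
  congr 1
  rw [show (Bᴴ * (mpow X s * A * mpow X (1 - s)))ᴴ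
      = mpow X (1 - s) * (Aᴴ * (mpow X s * B)) from by
    simp [Matrix.conjTranspose_mul, mpow_herm hX.1, Matrix.mul_assoc], tau_mul_comm]
  congr 1
  simp [Matrix.mul_assoc]

lemma tau_sandwich_integrand_re_nonneg {X : Matrix N N ℂ} (hX : X.PosDef) (s : ℝ)
    (A : Matrix N N ℂ) :
    0 ≤ (tau (Aᴴ * (mpow X s * A * mpow X (1 - s)))).re := by
  have hs : mpow X s = mpow X (s/2) * mpow X (s/2) := by rw [mpow_mul hX, add_halves]
  have ht : mpow X (1 - s) = mpow X ((1-s)/2) * mpow X ((1-s)/2) := by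
    rw [mpow_mul hX, add_halves]
  have e1 : tau (Aᴴ * (mpow X s * A * mpow X (1 - s)))
      = tau ((mpow X (s/2) * A * mpow X ((1-s)/2))ᴴ * (mpow X (s/2) * A * mpow X ((1-s)/2))) := by
    rw [hs, ht]
    rw [show Aᴴ * (mpow X (s/2) * mpow X (s/2) * A * (mpow X ((1-s)/2) * mpow X ((1-s)/2)))
        = (Aᴴ * (mpow X (s/2) * (mpow X (s/2) * (A * mpow X ((1-s)/2))))) * mpow X ((1-s)/2) from by
      simp [Matrix.mul_assoc], tau_mul_comm]
    congr 1
    simp [Matrix.conjTranspose_mul, mpow_herm hX.1, Matrix.mul_assoc]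
  rw [e1]
  exact tau_mul_self_re_nonneg _

lemma gns_sandwich_re_nonneg {X : Matrix N N ℂ} (hX : X.PosDef) (α : ℝ) (A : Matrix N N ℂ) :
    0 ≤ (gns A (sandwich X α A)).re := by
  rw [gns_sandwich hX, intervalIntegral.integral_of_le zero_le_one]
  have h1 : (0:ℝ) ≤ ∫ s in Set.Ioc (0:ℝ) 1,
      (Real.exp (α * (s - 1/2)) • tau (Aᴴ * (mpow X s * A * mpow X (1 - s)))).re := by
    refine setIntegral_nonneg measurableSet_Ioc fun s _ => ?_
    rw [Complex.smul_re]
    exact mul_nonneg (Real.exp_pos _).le (tau_sandwich_integrand_re_nonneg hX s A)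
  exact le_of_le_of_eq h1 (integral_re ((contTauIntegrand hX α A A).intervalIntegrable 0 1).1)

lemma sandwich_sub {X : Matrix N N ℂ} (hX : X.PosDef) (α : ℝ) (A B : Matrix N N ℂ) :
    sandwich X α (A - B) = sandwich X α A - sandwich X α B := by
  ext i k
  simp only [sandwich, Matrix.sub_apply, Matrix.of_apply]
  rw [← intervalIntegral.integral_sub ((contIntegrand hX α A i k).intervalIntegrable 0 1)
    ((contIntegrand hX α B i k).intervalIntegrable 0 1)]
  refine intervalIntegral.integral_congr fun s _ => ?_
  rw [← smul_sub]
  congr 1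
  simp [Matrix.mul_sub, Matrix.sub_mul, Matrix.sub_apply]

lemma gns_sub_left (A B C : Matrix N N ℂ) : gns (A - B) C = gns A C - gns B C := by
  simp [gns, Matrix.conjTranspose_sub, Matrix.sub_mul, tau_sub]

lemma gns_sub_right (A B C : Matrix N N ℂ) : gns A (B - C) = gns A B - gns A C := by
  simp [gns, Matrix.mul_sub, tau_sub]

lemma gnsH_conj (V W : J → Matrix N N ℂ) : gnsH V W = starRingEnd ℂ (gnsH W V) := by
  rw [gnsH, gnsH, map_sum]
  exact Finset.sum_congr rfl fun j _ => gns_conj _ _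

lemma gnsH_sub_left (V W U : J → Matrix N N ℂ) : gnsH (V - W) U = gnsH V U - gnsH W U := by
  simp [gnsH, Pi.sub_apply, gns_sub_left, Finset.sum_sub_distrib]

lemma gnsH_sub_right (V W U : J → Matrix N N ℂ) : gnsH V (W - U) = gnsH V W - gnsH V U := by
  simp [gnsH, Pi.sub_apply, gns_sub_right, Finset.sum_sub_distrib]

lemma opOmega_sub {ρ : Matrix N N ℂ} (hρ : ρ.PosDef) (ω : J → ℝ) (V W : J → Matrix N N ℂ) :
    opOmega ω ρ (V - W) = opOmega ω ρ V - opOmega ω ρ W := by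
  funext j
  simp [opOmega, Pi.sub_apply, sandwich_sub hρ]

lemma gnsH_opOmega_symm {ρ : Matrix N N ℂ} (hρ : ρ.PosDef) (ω : J → ℝ)
    (V W : J → Matrix N N ℂ) :
    gnsH (opOmega ω ρ V) W = gnsH V (opOmega ω ρ W) := by
  rw [gnsH, gnsH]
  exact Finset.sum_congr rfl fun j _ => gns_sandwich_symm hρ _ _ _

lemma gnsH_opOmega_re_nonneg {ρ : Matrix N N ℂ} (hρ : ρ.PosDef) (ω : J → ℝ)
    (V : J → Matrix N N ℂ) :
    0 ≤ (gnsH V (opOmega ω ρ V)).re := by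
  rw [gnsH, Complex.re_sum]
  exact Finset.sum_nonneg fun j _ => gns_sandwich_re_nonneg hρ _ _

lemma young {ρ : Matrix N N ℂ} (hρ : ρ.PosDef) (ω : J → ℝ) (W X : J → Matrix N N ℂ) :
    (gnsH (opOmega ω ρ W) X).re
      ≤ (1/2) * (gnsH W (opOmega ω ρ W)).re + (1/2) * (gnsH X (opOmega ω ρ X)).re := by
  have h0 : 0 ≤ (gnsH (W - X) (opOmega ω ρ (W - X))).re := gnsH_opOmega_re_nonneg hρ ω _
  rw [opOmega_sub hρ, gnsH_sub_left, gnsH_sub_right, gnsH_sub_right] at h0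
  simp only [Complex.sub_re] at h0
  have hsymm : (gnsH X (opOmega ω ρ W)).re = (gnsH W (opOmega ω ρ X)).re := by
    rw [gnsH_conj X (opOmega ω ρ W), gnsH_opOmega_symm hρ, Complex.conj_re]
  rw [gnsH_opOmega_symm hρ]
  linarith

lemma hasDerivAt_complex_re {g : ℝ → ℂ} {g' : ℂ} {x : ℝ} (h : HasDerivAt g g' x) :
    HasDerivAt (fun t => (g t).re) g'.re x := by
  exact Complex.reCLM.hasFDerivAt.comp_hasDerivAt x h

lemma ofReal_integral_le {μ : Measure ℝ} {f : ℝ → ℝ} (hf : Integrable f μ) :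
    ENNReal.ofReal (∫ x, f x ∂μ) ≤ ∫⁻ x, ENNReal.ofReal (f x) ∂μ := by
  calc ENNReal.ofReal (∫ x, f x ∂μ)
      ≤ ENNReal.ofReal (∫ x, max (f x) 0 ∂μ) :=
        ENNReal.ofReal_le_ofReal (integral_mono hf hf.pos_part fun x => le_max_left _ _)
    _ = ∫⁻ x, ENNReal.ofReal (max (f x) 0) ∂μ :=
        ofReal_integral_eq_lintegral_ofReal hf.pos_part
          (Filter.Eventually.of_forall fun x => le_max_right _ _)
    _ = ∫⁻ x, ENNReal.ofReal (f x) ∂μ := by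
        congr 1
        funext x
        rcases le_total 0 (f x) with h | h
        · rw [max_eq_left h]
        · rw [max_eq_right h, ENNReal.ofReal_of_nonpos h, ENNReal.ofReal_of_nonpos le_rfl]

end
end HJBAux

open HJBAux in

/-- **Easy inequality in the duality formula.**  For every HJB`_ε` subsolution `A` and every
`(ρ, V) ∈ CE_ε(ρ₀,ρ₁)` one has `τ(A(1)ρ₁ - A(0)ρ₀) ≤ ½ ∫₀¹ ⟨V(t), [ρ(t)]_ω⁻¹ V(t)⟩ dt`;
consequently `sup_{A ∈ HJB_ε} τ(A(1)ρ₁ - A(0)ρ₀) ≤ ½ W_ε²(ρ₀,ρ₁)`. -/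
theorem hjb_le_action
    {N : Type*} [Fintype N] [DecidableEq N] {J : Type*} [Fintype J]
    (ε : ℝ) (hε : 0 ≤ ε)
    (st : J → J) (Vf : J → Matrix N N ℂ) (ω : J → ℝ)
    (hON : ∀ j k, tau ((Vf j)ᴴ * Vf k) = if j = k then 1 else 0)
    (htr : ∀ j, tau (Vf j) = 0)
    (hstinv : ∀ j, st (st j) = j)
    (hVst : ∀ j, Vf (st j) = (Vf j)ᴴ)
    (hωst : ∀ j, ω (st j) = -ω j)
    (σ : Matrix N N ℂ) (hσ : σ.PosDef) (hσtr : tau σ = 1)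
    (hDBC : ∀ j, σ * Vf j = Real.exp (-ω j) • (Vf j * σ))
    (dvg : (J → Matrix N N ℂ) → Matrix N N ℂ)
    (hdvg : ∀ (W : J → Matrix N N ℂ) (B : Matrix N N ℂ),
      gns (dvg W) B = -∑ j, gns (W j) (Vf j * B - B * Vf j))
    (Ldag : Matrix N N ℂ → Matrix N N ℂ)
    (hLdag : ∀ ρ B : Matrix N N ℂ, gns (Ldag ρ) B = gns ρ (genL Vf ω B))
    (ρ₀ ρ₁ : Matrix N N ℂ)
    (h₀ : ρ₀.PosDef) (h₀tr : tau ρ₀ = 1) (h₁ : ρ₁.PosDef) (h₁tr : tau ρ₁ = 1) :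
    (∀ A A' : ℝ → Matrix N N ℂ, IsHJB Vf ω ε A A' →
      ∀ (ρ : ℝ → Matrix N N ℂ) (Vc : ℝ → J → Matrix N N ℂ),
        IsCE dvg Ldag ε ρ₀ ρ₁ ρ Vc →
          ENNReal.ofReal (tau (A 1 * ρ₁ - A 0 * ρ₀)).re ≤
            (∫⁻ t in Set.Icc (0:ℝ) 1, invQuadH (opOmega ω (ρ t)) (Vc t)) / 2) ∧
    (⨆ (A : ℝ → Matrix N N ℂ) (A' : ℝ → Matrix N N ℂ) (_ : IsHJB Vf ω ε A A'),
        ENNReal.ofReal (tau (A 1 * ρ₁ - A 0 * ρ₀)).re) ≤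
      Wsq ω dvg Ldag ε ρ₀ ρ₁ / 2 := by
  have main : ∀ A A' : ℝ → Matrix N N ℂ, IsHJB Vf ω ε A A' →
      ∀ (ρ : ℝ → Matrix N N ℂ) (Vc : ℝ → J → Matrix N N ℂ),
        IsCE dvg Ldag ε ρ₀ ρ₁ ρ Vc →
          ENNReal.ofReal (tau (A 1 * ρ₁ - A 0 * ρ₀)).re ≤
            (∫⁻ t in Set.Icc (0:ℝ) 1, invQuadH (opOmega ω (ρ t)) (Vc t)) / 2 := by
    intro A A' hA ρc Vc hCE
    obtain ⟨hρ0, hρ1, hρpos, hVcont, ρ', hρD, hρ'cont, hceq⟩ := hCE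
    obtain ⟨hAherm, hAderiv, hA'cont, hHJB⟩ := hA
    set F' : ℝ → ℝ := fun t => (tau (A' t * ρc t + A t * ρ' t)).re with hF'
    have huIcc : Set.uIcc (0:ℝ) 1 = Set.Icc 0 1 := Set.uIcc_of_le zero_le_one
    -- differentiability of t ↦ Re τ(A(t)ρ(t))
    have hfD : ∀ t ∈ Set.Icc (0:ℝ) 1,
        HasDerivAt (fun u => (tau (A u * ρc u)).re) (F' t) t := by
      intro t ht
      have h1 : HasDerivAt (fun u => ∑ i, ∑ k, A u i k * ρc u k i)
          (∑ i, ∑ k, (A' t i k * ρc t k i + A t i k * ρ' t k i)) t :=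
        HasDerivAt.fun_sum fun i _ => HasDerivAt.fun_sum fun k _ =>
          (hAderiv t ht i k).fun_mul (hρD t ht k i)
      have e1 : ∀ u, tau (A u * ρc u)
          = (∑ i, ∑ k, A u i k * ρc u k i) / (Fintype.card N : ℂ) := by
        intro u
        simp [tau, Matrix.trace, Matrix.diag, Matrix.mul_apply]
      have e2 : F' t = ((∑ i, ∑ k, (A' t i k * ρc t k i + A t i k * ρ' t k i))
          / (Fintype.card N : ℂ)).re := by
        simp [hF', tau, Matrix.trace, Matrix.diag, Matrix.add_apply, Matrix.mul_apply,
          Finset.sum_add_distrib]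
      rw [e2]
      simp only [e1]
      exact hasDerivAt_complex_re (h1.div_const _)
    -- continuity of F' on [0,1]
    have hAcont : ∀ i k, ContinuousOn (fun t => A t i k) (Set.Icc (0:ℝ) 1) :=
      fun i k t ht => ((hAderiv t ht i k).continuousAt).continuousWithinAt
    have hρcont : ∀ i k, ContinuousOn (fun t => ρc t i k) (Set.Icc (0:ℝ) 1) :=
      fun i k t ht => ((hρD t ht i k).continuousAt).continuousWithinAt
    have hF'cont : ContinuousOn F' (Set.Icc (0:ℝ) 1) := by
      have : ContinuousOn (fun t => tau (A' t * ρc t + A t * ρ' t)) (Set.Icc (0:ℝ) 1) := by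
        simp only [tau, Matrix.trace, Matrix.diag, Matrix.add_apply, Matrix.mul_apply]
        refine ContinuousOn.div_const (continuousOn_finset_sum _ fun i _ => ?_) _
        refine ContinuousOn.add (continuousOn_finset_sum _ fun k _ => ?_)
          (continuousOn_finset_sum _ fun k _ => ?_)
        · exact (hA'cont i k).mul (hρcont k i)
        · exact (hAcont i k).mul (hρ'cont k i)
      exact Complex.continuous_re.comp_continuousOn this
    -- pointwise bound
    have hpt : ∀ t ∈ Set.Icc (0:ℝ) 1,
        ENNReal.ofReal (F' t) ≤ invQuadH (opOmega ω (ρc t)) (Vc t) / 2 := by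
      intro t ht
      have hρt : (ρc t).PosDef := (hρpos t ht).1
      have hherm : (A t)ᴴ = A t := hAherm t ht
      have hρherm : (ρc t)ᴴ = ρc t := hρt.1
      have hρ't : ρ' t = ε • Ldag (ρc t) - dvg (Vc t) := eq_sub_of_add_eq (hceq t ht)
      have hHJBt := hHJB t ht (ρc t) hρt.posSemidef (hρpos t ht).2
      have hsplit : (tau ((A' t + ε • genL Vf ω (A t)) * ρc t)).re
          = (tau (A' t * ρc t)).re + ε * (tau (genL Vf ω (A t) * ρc t)).re := by
        rw [Matrix.add_mul, tau_add, Matrix.smul_mul, tau_smul, Complex.add_re,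
          Complex.smul_re, smul_eq_mul]
      have hterm1 : (tau (A t * Ldag (ρc t))).re = (tau (genL Vf ω (A t) * ρc t)).re := by
        rw [tau_herm_mul hherm, Complex.conj_re, hLdag, gns, hρherm, tau_mul_comm]
      have hterm2 : (tau (A t * dvg (Vc t))).re
          = - (gnsH (Vc t) (gradD Vf (A t))).re := by
        rw [tau_herm_mul hherm, Complex.conj_re, hdvg]
        simp [gnsH, gradD]
      have hsum : (tau (A t * ρ' t)).re
          = ε * (tau (genL Vf ω (A t) * ρc t)).re + (gnsH (Vc t) (gradD Vf (A t))).re := by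
        rw [hρ't, Matrix.mul_sub, tau_sub, Complex.sub_re, Matrix.mul_smul, tau_smul,
          Complex.smul_re, smul_eq_mul, hterm1, hterm2]
        ring
      have hFt : F' t = (tau (A' t * ρc t)).re + (tau (A t * ρ' t)).re := by
        rw [hF']
        simp only [tau_add, Complex.add_re]
      by_cases h : ∃ W, opOmega ω (ρc t) W = Vc t ∧
          ∀ U, opOmega ω (ρc t) U = 0 → gnsH W U = 0
      · have hw : opOmega ω (ρc t) h.choose = Vc t := h.choose_spec.1
        have hVX : (gnsH (Vc t) (gradD Vf (A t))).re
            = (gnsH (opOmega ω (ρc t) h.choose) (gradD Vf (A t))).re := by rw [hw]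
        have hyoung := young hρt ω h.choose (gradD Vf (A t))
        have hfinal : F' t ≤ (1/2) * (gnsH h.choose (opOmega ω (ρc t) h.choose)).re := by
          linarith [hFt, hsum, hsplit, hVX, hyoung, hHJBt]
        simp only [invQuadH, dif_pos h]
        calc ENNReal.ofReal (F' t)
            ≤ ENNReal.ofReal ((gnsH h.choose (opOmega ω (ρc t) h.choose)).re / 2) :=
              ENNReal.ofReal_le_ofReal (by linarith)
          _ = ENNReal.ofReal ((gnsH h.choose (opOmega ω (ρc t) h.choose)).re) / 2 := by
              rw [ENNReal.ofReal_div_of_pos two_pos]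
              simp
      · simp only [invQuadH, dif_neg h, ENNReal.top_div_of_ne_top ENNReal.ofNat_ne_top]
        exact le_top
    -- assembly
    have hFTC : ∫ t in (0:ℝ)..1, F' t
        = (tau (A 1 * ρc 1)).re - (tau (A 0 * ρc 0)).re :=
      intervalIntegral.integral_eq_sub_of_hasDerivAt
        (fun t ht => hfD t (huIcc ▸ ht))
        (ContinuousOn.intervalIntegrable (by rw [huIcc]; exact hF'cont))
    have hD : (tau (A 1 * ρ₁ - A 0 * ρ₀)).re = ∫ t in Set.Icc (0:ℝ) 1, F' t := by
      rw [MeasureTheory.integral_Icc_eq_integral_Ioc,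
        ← intervalIntegral.integral_of_le zero_le_one, hFTC, tau_sub, Complex.sub_re,
        hρ0, hρ1]
    rw [hD]
    calc ENNReal.ofReal (∫ t in Set.Icc (0:ℝ) 1, F' t)
        ≤ ∫⁻ t in Set.Icc (0:ℝ) 1, ENNReal.ofReal (F' t) :=
          ofReal_integral_le (ContinuousOn.integrableOn_compact isCompact_Icc hF'cont)
      _ ≤ ∫⁻ t in Set.Icc (0:ℝ) 1, invQuadH (opOmega ω (ρc t)) (Vc t) / 2 := by
          rw [← lintegral_indicator measurableSet_Icc, ← lintegral_indicator measurableSet_Icc]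
          refine lintegral_mono fun t => ?_
          by_cases ht : t ∈ Set.Icc (0:ℝ) 1
          · simpa [Set.indicator_of_mem ht] using hpt t ht
          · simp [Set.indicator_of_notMem ht]
      _ = (∫⁻ t in Set.Icc (0:ℝ) 1, invQuadH (opOmega ω (ρc t)) (Vc t)) / 2 := by
          simp only [div_eq_mul_inv]
          exact lintegral_mul_const' _ _ (by simp)
  refine ⟨main, ?_⟩
  refine iSup_le fun A => iSup_le fun A' => iSup_le fun hA => ?_
  rw [Wsq, ENNReal.le_div_iff_mul_le (Or.inl two_ne_zero) (Or.inl ENNReal.ofNat_ne_top)]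
  refine le_iInf fun ρ => le_iInf fun Vc => le_iInf fun hce => ?_
  have h1 := main A A' hA ρ Vc hce
  rwa [ENNReal.le_div_iff_mul_le (Or.inl two_ne_zero) (Or.inl ENNReal.ofNat_ne_top)] at h1
end

section
/- Let K_n (n ∈ ℕ) be positive definite (invertible positive semidefinite) operators on a finite-dimensional complex inner product space that converge monotonically decreasing (K_{n+1} ≤ K_n in the Loewner order) to a positive semidefinite operator K. Then for every vector V the sequence ⟨V, K_n⁻¹V⟩ is monotonically increasing and converges to the extended value ⟨V, K⁻¹V⟩ in [0,∞]. -/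
open scoped ENNReal InnerProductSpace Classical

/-- Extended value `⟨V, K⁻¹ V⟩ ∈ [0,∞]` for a positive semidefinite operator `K`:
equals `⟨W, K W⟩` if `V = K W` with `W ⊥ ker K`, and `+∞` if `V ∉ ran K`. -/
noncomputable def invQuad {E : Type*} [NormedAddCommGroup E] [InnerProductSpace ℂ E]
    (K : E →ₗ[ℂ] E) (V : E) : ℝ≥0∞ :=
  if h : ∃ W, K W = V ∧ ∀ U, K U = 0 → ⟪W, U⟫_ℂ = 0
  then ENNReal.ofReal (⟪h.choose, K h.choose⟫_ℂ).re
  else ⊤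

section Aux
variable {E : Type*} [NormedAddCommGroup E] [InnerProductSpace ℂ E]

/-- Variational quantity: `⨆ x, (2 Re⟪x,V⟫ - Re⟪x,Kx⟫)₊`. -/
noncomputable def qsup (K : E →ₗ[ℂ] E) (V : E) : ℝ≥0∞ :=
  ⨆ x : E, ENNReal.ofReal (2 * (⟪x, V⟫_ℂ).re - (⟪x, K x⟫_ℂ).re)

lemma quad_le (K : E →ₗ[ℂ] E) (hK : ∀ x y : E, ⟪K x, y⟫_ℂ = ⟪x, K y⟫_ℂ)
    (hP : ∀ x : E, 0 ≤ (⟪x, K x⟫_ℂ).re) (W x : E) :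
    2 * (⟪x, K W⟫_ℂ).re - (⟪x, K x⟫_ℂ).re ≤ (⟪W, K W⟫_ℂ).re := by
  have h0 := hP (W - x)
  have expand : ⟪W - x, K (W - x)⟫_ℂ
      = ⟪W, K W⟫_ℂ - ⟪K W, x⟫_ℂ - ⟪x, K W⟫_ℂ + ⟪x, K x⟫_ℂ := by
    rw [map_sub, inner_sub_left, inner_sub_right, inner_sub_right, hK]
    ring
  have hre : (⟪K W, x⟫_ℂ).re = (⟪x, K W⟫_ℂ).re := by rw [← inner_conj_symm]; exact (Complex.conj_re _)
  rw [expand] at h0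
  simp only [Complex.add_re, Complex.sub_re] at h0
  linarith

lemma qsup_eq_of_eq (K : E →ₗ[ℂ] E) (hK : ∀ x y : E, ⟪K x, y⟫_ℂ = ⟪x, K y⟫_ℂ)
    (hP : ∀ x : E, 0 ≤ (⟪x, K x⟫_ℂ).re) {W V : E} (hW : K W = V) :
    qsup K V = ENNReal.ofReal (⟪W, K W⟫_ℂ).re := by
  refine le_antisymm (iSup_le fun x => ?_) ?_
  · exact ENNReal.ofReal_le_ofReal (by rw [← hW]; exact quad_le K hK hP W x)
  · refine le_trans (le_of_eq ?_) (le_iSup _ W)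
    congr 1
    rw [← hW]
    ring
end Aux

section Aux2
variable {E : Type*} [NormedAddCommGroup E] [InnerProductSpace ℂ E] [FiniteDimensional ℂ E]

lemma cond_of_mem_range {K : E →ₗ[ℂ] E} {V : E} (hV : V ∈ LinearMap.range K) :
    ∃ W, K W = V ∧ ∀ U, K U = 0 → ⟪W, U⟫_ℂ = 0 := by
  obtain ⟨W₀, hW₀⟩ := hV
  haveI : CompleteSpace E := FiniteDimensional.complete ℂ E
  set N : Submodule ℂ E := LinearMap.ker K
  refine ⟨W₀ - (Submodule.orthogonalProjectionOnto N W₀ : E), ?_, ?_⟩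
  · rw [map_sub, hW₀, LinearMap.mem_ker.mp (Submodule.orthogonalProjectionOnto N W₀).2, sub_zero]
  · intro U hU
    have hm : W₀ - (Submodule.orthogonalProjectionOnto N W₀ : E) ∈ Nᗮ :=
      Submodule.sub_starProjection_mem_orthogonal W₀
    exact (Submodule.mem_orthogonal' N _).mp hm U (LinearMap.mem_ker.mpr hU)

lemma qsup_eq_top {K : E →ₗ[ℂ] E} (hK : ∀ x y : E, ⟪K x, y⟫_ℂ = ⟪x, K y⟫_ℂ)
    {V : E} (hV : V ∉ LinearMap.range K) : qsup K V = ⊤ := by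
  haveI : CompleteSpace E := FiniteDimensional.complete ℂ E
  set S : Submodule ℂ E := LinearMap.range K
  set u : E := V - (Submodule.orthogonalProjectionOnto S V : E) with hu_def
  have huS : u ∈ Sᗮ := Submodule.sub_starProjection_mem_orthogonal V
  have hu0 : u ≠ 0 := by
    intro h
    exact hV (by rw [show V = (Submodule.orthogonalProjectionOnto S V : E) by
      rwa [hu_def, sub_eq_zero] at h]; exact (Submodule.orthogonalProjectionOnto S V).2)
  have hKu : K u = 0 := by
    have h1 : ⟪K u, K u⟫_ℂ = 0 := by
      rw [hK]
      exact ((Submodule.mem_orthogonal' S u).mp huS) _ ⟨K u, rfl⟩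
    exact inner_self_eq_zero.mp h1
  have hcV : (⟪u, V⟫_ℂ).re = ‖u‖ ^ 2 := by
    have : ⟪u, V⟫_ℂ = ⟪u, (Submodule.orthogonalProjectionOnto S V : E)⟫_ℂ + ⟪u, u⟫_ℂ := by
      rw [← inner_add_right]
      congr 1
      rw [hu_def]; abel
    rw [this, ((Submodule.mem_orthogonal' S u).mp huS) _ (Submodule.orthogonalProjectionOnto S V).2,
      zero_add, inner_self_eq_norm_sq_to_K]
    norm_cast
  have hc : 0 < (⟪u, V⟫_ℂ).re := by
    rw [hcV]
    exact pow_pos (norm_pos_iff.mpr hu0) 2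
  have key : ∀ n : ℕ, (n : ℝ≥0∞) ≤ qsup K V := by
    intro n
    set t : ℝ := n / (⟪u, V⟫_ℂ).re
    set x : E := (t : ℂ) • u
    have hxV : (⟪x, V⟫_ℂ).re = n := by
      rw [inner_smul_left, Complex.conj_ofReal, Complex.re_ofReal_mul]
      exact div_mul_cancel₀ _ hc.ne'
    have hxK : (⟪x, K x⟫_ℂ).re = 0 := by
      simp [x, hKu]
    calc (n : ℝ≥0∞) = ENNReal.ofReal n := (ENNReal.ofReal_natCast n).symm
      _ ≤ ENNReal.ofReal (2 * (⟪x, V⟫_ℂ).re - (⟪x, K x⟫_ℂ).re) := by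
          rw [hxV, hxK]
          exact ENNReal.ofReal_le_ofReal (by linarith)
      _ ≤ qsup K V := by
          unfold qsup
          exact le_iSup (fun y : E => ENNReal.ofReal (2 * (⟪y, V⟫_ℂ).re - (⟪y, K y⟫_ℂ).re)) x
  refine le_antisymm le_top ?_
  rw [← ENNReal.iSup_natCast]
  exact iSup_le key

lemma invQuad_eq_qsup {K : E →ₗ[ℂ] E} (hK : ∀ x y : E, ⟪K x, y⟫_ℂ = ⟪x, K y⟫_ℂ)
    (hP : ∀ x : E, 0 ≤ (⟪x, K x⟫_ℂ).re) (V : E) : invQuad K V = qsup K V := by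
  by_cases h : ∃ W, K W = V ∧ ∀ U, K U = 0 → ⟪W, U⟫_ℂ = 0
  · rw [invQuad, dif_pos h, qsup_eq_of_eq K hK hP h.choose_spec.1]
  · rw [invQuad, dif_neg h, qsup_eq_top hK]
    intro hV
    exact h (cond_of_mem_range hV)
end Aux2

/-- **Monotone convergence of inverse quadratic forms** (Lemma 1.1).  If positive definite
operators `K n` decrease monotonically (in the Loewner order) to a positive semidefinite
operator `K`, then `⟨V, (K n)⁻¹ V⟩` increases monotonically to `⟨V, K⁻¹ V⟩` in `[0,∞]`. -/
theorem monotone_convergence_invQuad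
    {E : Type*} [NormedAddCommGroup E] [InnerProductSpace ℂ E] [FiniteDimensional ℂ E]
    (K : ℕ → E →ₗ[ℂ] E) (Klim : E →ₗ[ℂ] E)
    (hsym : ∀ n, ∀ x y : E, ⟪K n x, y⟫_ℂ = ⟪x, K n y⟫_ℂ)
    (hpos : ∀ n, ∀ x : E, x ≠ 0 → 0 < (⟪x, K n x⟫_ℂ).re)
    (hdec : ∀ n, ∀ x : E, 0 ≤ (⟪x, K n x - K (n+1) x⟫_ℂ).re)
    (hlimsym : ∀ x y : E, ⟪Klim x, y⟫_ℂ = ⟪x, Klim y⟫_ℂ)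
    (hlimpos : ∀ x : E, 0 ≤ (⟪x, Klim x⟫_ℂ).re)
    (htends : ∀ x : E, Filter.Tendsto (fun n => K n x) Filter.atTop (nhds (Klim x)))
    (V : E) :
    Monotone (fun n => invQuad (K n) V) ∧
      Filter.Tendsto (fun n => invQuad (K n) V) Filter.atTop (nhds (invQuad Klim V)) := by
  have hP : ∀ n, ∀ x : E, 0 ≤ (⟪x, K n x⟫_ℂ).re := by
    intro n x
    by_cases hx : x = 0
    · simp [hx]
    · exact le_of_lt (hpos n x hx)
  have heq : ∀ n, invQuad (K n) V = qsup (K n) V := fun n => invQuad_eq_qsup (hsym n) (hP n) V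
  have heqlim : invQuad Klim V = qsup Klim V := invQuad_eq_qsup hlimsym hlimpos V
  have hanti : ∀ x : E, Antitone (fun n => (⟪x, K n x⟫_ℂ).re) := by
    intro x
    apply antitone_nat_of_succ_le
    intro n
    have h := hdec n x
    rw [inner_sub_right, Complex.sub_re] at h
    linarith
  have hmono : Monotone (fun n => qsup (K n) V) := by
    intro m n hmn
    unfold qsup
    refine iSup_mono fun x => ENNReal.ofReal_le_ofReal ?_
    have := hanti x hmn
    linarith
  have hlim : ∀ x : E, Filter.Tendsto (fun n => (⟪x, K n x⟫_ℂ).re) Filter.atTop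
      (nhds ((⟪x, Klim x⟫_ℂ).re)) := by
    intro x
    exact (Complex.continuous_re.tendsto _).comp (tendsto_const_nhds.inner (htends x))
  have hsupeq : (⨆ n, qsup (K n) V) = qsup Klim V := by
    unfold qsup
    rw [iSup_comm]
    refine iSup_congr fun x => ?_
    have mono : Monotone (fun n => ENNReal.ofReal (2 * (⟪x, V⟫_ℂ).re - (⟪x, K n x⟫_ℂ).re)) :=
      fun m n h => ENNReal.ofReal_le_ofReal (by have := hanti x h; linarith)
    have tnd : Filter.Tendsto (fun n => ENNReal.ofReal (2 * (⟪x, V⟫_ℂ).re - (⟪x, K n x⟫_ℂ).re))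
        Filter.atTop (nhds (ENNReal.ofReal (2 * (⟪x, V⟫_ℂ).re - (⟪x, Klim x⟫_ℂ).re))) :=
      ENNReal.tendsto_ofReal (Filter.Tendsto.sub tendsto_const_nhds (hlim x))
    exact tendsto_nhds_unique (tendsto_atTop_iSup mono) tnd
  constructor
  · intro m n h
    simp only [heq]
    exact hmono h
  · have h := tendsto_atTop_iSup hmono
    rw [hsupeq] at h
    simpa only [heq, heqlim] using h
end

section
/- Let K be a positive semidefinite operator on a finite-dimensional complex inner product space and V a vector. Then the extended value satisfies ⟨V, K⁻¹V⟩ = sup_{δ > 0} ⟨V, (K + δ·I)⁻¹V⟩, as an identity in [0,∞]. -/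
open scoped ENNReal InnerProductSpace Classical

section Aux
variable {E : Type*} [NormedAddCommGroup E] [InnerProductSpace ℂ E]

lemma re_symm (K : E →ₗ[ℂ] E) (hsym : ∀ x y : E, ⟪K x, y⟫_ℂ = ⟪x, K y⟫_ℂ)
    (x y : E) : (⟪x, K y⟫_ℂ).re = (⟪y, K x⟫_ℂ).re := by
  have h1 : ⟪x, K y⟫_ℂ = (starRingEnd ℂ) ⟪K y, x⟫_ℂ := (inner_conj_symm _ _).symm
  rw [h1, hsym y x, Complex.conj_re]

lemma cs_re (K : E →ₗ[ℂ] E) (hsym : ∀ x y : E, ⟪K x, y⟫_ℂ = ⟪x, K y⟫_ℂ)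
    (hpos : ∀ x : E, 0 ≤ (⟪x, K x⟫_ℂ).re) (x y : E) :
    (⟪x, K y⟫_ℂ).re ^ 2 ≤ (⟪x, K x⟫_ℂ).re * (⟪y, K y⟫_ℂ).re := by
  have key : ∀ t : ℝ, 0 ≤ (⟪y, K y⟫_ℂ).re * (t * t) + (2 * (⟪x, K y⟫_ℂ).re) * t
      + (⟪x, K x⟫_ℂ).re := by
    intro t
    have h := hpos (x + (t : ℂ) • y)
    simp only [map_add, map_smul, inner_add_left, inner_add_right, inner_smul_left,
      inner_smul_right, Complex.add_re, Complex.mul_re, Complex.conj_re, Complex.conj_im,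
      Complex.ofReal_re, Complex.ofReal_im] at h
    have hyx : (⟪y, K x⟫_ℂ).re = (⟪x, K y⟫_ℂ).re := re_symm K hsym y x
    rw [hyx] at h
    nlinarith [h]
  have hd := discrim_le_zero key
  rw [discrim] at hd
  nlinarith [hd]

lemma invQuad_eq (K : E →ₗ[ℂ] E) (V W : E) (hW : K W = V)
    (horth : ∀ U, K U = 0 → ⟪W, U⟫_ℂ = 0) :
    invQuad K V = ENNReal.ofReal (⟪W, K W⟫_ℂ).re := by
  have h : ∃ W', K W' = V ∧ ∀ U, K U = 0 → ⟪W', U⟫_ℂ = 0 := ⟨W, hW, horth⟩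
  rw [invQuad, dif_pos h]
  obtain ⟨hW', horth'⟩ := h.choose_spec
  have hker : K (h.choose - W) = 0 := by rw [map_sub, hW', hW, sub_self]
  have hzero : ⟪h.choose - W, h.choose - W⟫_ℂ = 0 := by
    rw [inner_sub_left, horth' _ hker, horth _ hker, sub_zero]
  have : h.choose = W := by
    have := inner_self_eq_zero.mp hzero
    rwa [sub_eq_zero] at this
  rw [this]


lemma inner_rsmul_left (r : ℝ) (x y : E) : ⟪r • x, y⟫_ℂ = r • ⟪x, y⟫_ℂ := by
  rw [← Complex.coe_smul, inner_smul_left, Complex.conj_ofReal, Complex.real_smul]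

lemma inner_rsmul_right (r : ℝ) (x y : E) : ⟪x, r • y⟫_ℂ = r • ⟪x, y⟫_ℂ := by
  rw [← Complex.coe_smul, inner_smul_right, Complex.real_smul]

lemma Lre (K : E →ₗ[ℂ] E) (δ : ℝ) (x : E) :
    (⟪x, (K + (δ : ℂ) • (LinearMap.id : E →ₗ[ℂ] E)) x⟫_ℂ).re
      = (⟪x, K x⟫_ℂ).re + δ * ‖x‖ ^ 2 := by
  have hx : ⟪x, x⟫_ℂ = (‖x‖ : ℂ) ^ 2 := inner_self_eq_norm_sq_to_K x
  simp [LinearMap.add_apply, LinearMap.smul_apply, inner_add_right, inner_rsmul_right,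
    hx, Complex.smul_re, ← Complex.ofReal_pow]

lemma Lsym (K : E →ₗ[ℂ] E) (hsym : ∀ x y : E, ⟪K x, y⟫_ℂ = ⟪x, K y⟫_ℂ) (δ : ℝ)
    (x y : E) : ⟪(K + (δ : ℂ) • (LinearMap.id : E →ₗ[ℂ] E)) x, y⟫_ℂ
      = ⟪x, (K + (δ : ℂ) • (LinearMap.id : E →ₗ[ℂ] E)) y⟫_ℂ := by
  simp [LinearMap.add_apply, LinearMap.smul_apply, inner_add_left, inner_add_right,
    inner_rsmul_left, inner_rsmul_right, hsym x y, Complex.conj_ofReal]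

lemma exists_sol [FiniteDimensional ℂ E] (K : E →ₗ[ℂ] E)
    (hpos : ∀ x : E, 0 ≤ (⟪x, K x⟫_ℂ).re) (δ : ℝ) (hδ : 0 < δ) (V : E) :
    ∃ Wd : E, (K + (δ : ℂ) • (LinearMap.id : E →ₗ[ℂ] E)) Wd = V ∧
      invQuad (K + (δ : ℂ) • (LinearMap.id : E →ₗ[ℂ] E)) V
        = ENNReal.ofReal (⟪Wd, (K + (δ : ℂ) • (LinearMap.id : E →ₗ[ℂ] E)) Wd⟫_ℂ).re := by
  set L := K + (δ : ℂ) • (LinearMap.id : E →ₗ[ℂ] E) with hL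
  have hinj : Function.Injective L := by
    intro x y hxy
    have hz : L (x - y) = 0 := by rw [map_sub, hxy, sub_self]
    have h0 : (⟪x - y, L (x - y)⟫_ℂ).re = 0 := by rw [hz, inner_zero_right]; simp
    rw [hL, Lre] at h0
    have := hpos (x - y)
    have hn : ‖x - y‖ ^ 2 ≤ 0 := by nlinarith
    have : x - y = 0 := by
      rw [← norm_eq_zero]
      nlinarith [norm_nonneg (x - y)]
    rwa [sub_eq_zero] at this
  have hsurj : Function.Surjective L := (LinearMap.injective_iff_surjective).mp hinj
  obtain ⟨Wd, hWd⟩ := hsurj V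
  refine ⟨Wd, hWd, ?_⟩
  exact invQuad_eq L V Wd hWd (fun U hU => by
    have : U = 0 := hinj (by rw [hU, map_zero])
    rw [this, inner_zero_right])


lemma bound_lemma [FiniteDimensional ℂ E] (K : E →ₗ[ℂ] E)
    (hsym : ∀ x y : E, ⟪K x, y⟫_ℂ = ⟪x, K y⟫_ℂ)
    (hpos : ∀ x : E, 0 ≤ (⟪x, K x⟫_ℂ).re)
    (V W : E) (hW : K W = V) (δ : ℝ) (hδ : 0 < δ) :
    ∃ a : ℝ, invQuad (K + (δ : ℂ) • (LinearMap.id : E →ₗ[ℂ] E)) V = ENNReal.ofReal a ∧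
      0 ≤ a ∧ a ≤ (⟪W, K W⟫_ℂ).re ∧
      ((⟪W, K W⟫_ℂ).re - a) ^ 2 ≤ δ * ‖W‖ ^ 2 * (⟪W, K W⟫_ℂ).re := by
  obtain ⟨Wd, hWd, hiq⟩ := exists_sol K hpos δ hδ V
  set L := K + (δ : ℂ) • (LinearMap.id : E →ₗ[ℂ] E) with hLdef
  set C := (⟪W, K W⟫_ℂ).re with hC
  set a := (⟪Wd, L Wd⟫_ℂ).re with ha
  set r := (⟪Wd, K Wd⟫_ℂ).re with hr
  have hC0 : 0 ≤ C := hpos W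
  have hr0 : 0 ≤ r := hpos Wd
  have haeq : a = r + δ * ‖Wd‖ ^ 2 := Lre K δ Wd
  have ha0 : 0 ≤ a := by nlinarith [sq_nonneg ‖Wd‖]
  have haV : a = (⟪Wd, K W⟫_ℂ).re := by rw [ha, hWd, ← hW]
  have hcs := cs_re K hsym hpos Wd W
  have hra : r ≤ a := by nlinarith [sq_nonneg ‖Wd‖]
  have haC : a ≤ C := by nlinarith [hcs, hra, hr0, hC0, ha0]
  have h1 : C = (⟪W, L Wd⟫_ℂ).re := by rw [hC, hW, ← hWd]
  have h2 : (⟪W, L Wd⟫_ℂ).re = (⟪Wd, L W⟫_ℂ).re := re_symm L (Lsym K hsym δ) W Wd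
  have h3 : (⟪Wd, L W⟫_ℂ).re = (⟪Wd, K W⟫_ℂ).re + δ * (⟪Wd, W⟫_ℂ).re := by
    have hLW : L W = K W + (δ : ℂ) • W := rfl
    rw [hLW, inner_add_right, Complex.add_re, inner_smul_right]
    congr 1
    rw [Complex.mul_re]
    simp
  have hkey : C = a + δ * (⟪Wd, W⟫_ℂ).re := by rw [h1, h2, h3, ← haV]
  have habs : |(⟪Wd, W⟫_ℂ).re| ≤ ‖Wd‖ * ‖W‖ := by
    refine le_trans (Complex.abs_re_le_norm _) ?_
    exact norm_inner_le_norm _ _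
  have hsq : ((⟪Wd, W⟫_ℂ).re) ^ 2 ≤ (‖Wd‖ * ‖W‖) ^ 2 := by
    rw [← sq_abs]
    exact pow_le_pow_left₀ (abs_nonneg _) habs 2
  have hd : δ * ‖Wd‖ ^ 2 ≤ C := by nlinarith
  refine ⟨a, hiq, ha0, haC, ?_⟩
  calc (C - a) ^ 2 = δ ^ 2 * ((⟪Wd, W⟫_ℂ).re) ^ 2 := by rw [hkey]; ring
    _ ≤ δ ^ 2 * (‖Wd‖ * ‖W‖) ^ 2 := by
        exact mul_le_mul_of_nonneg_left hsq (sq_nonneg δ)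
    _ = (δ * ‖Wd‖ ^ 2) * (δ * ‖W‖ ^ 2) := by ring
    _ ≤ C * (δ * ‖W‖ ^ 2) := by
        refine mul_le_mul_of_nonneg_right hd (by positivity)
    _ = δ * ‖W‖ ^ 2 * C := by ring


lemma exists_kernel_witness [FiniteDimensional ℂ E] (K : E →ₗ[ℂ] E)
    (hsym : ∀ x y : E, ⟪K x, y⟫_ℂ = ⟪x, K y⟫_ℂ) (V : E)
    (hP : ¬ ∃ W, K W = V ∧ ∀ U, K U = 0 → ⟪W, U⟫_ℂ = 0) :
    ∃ U, K U = 0 ∧ ⟪U, V⟫_ℂ ≠ 0 := by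
  by_contra h
  push_neg at h
  apply hP
  have hle : LinearMap.range K ≤ (LinearMap.ker K)ᗮ := by
    rintro _ ⟨w, rfl⟩
    rw [Submodule.mem_orthogonal]
    intro u hu
    rw [LinearMap.mem_ker] at hu
    rw [← hsym, hu, inner_zero_left]
  have heq : LinearMap.range K = (LinearMap.ker K)ᗮ := by
    apply Submodule.eq_of_le_of_finrank_le hle
    have h1 := LinearMap.finrank_range_add_finrank_ker K
    have h2 := Submodule.finrank_add_finrank_orthogonal (LinearMap.ker K)
    omega
  have hVmem : V ∈ LinearMap.range K := by
    rw [heq, Submodule.mem_orthogonal]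
    intro u hu
    exact h u (LinearMap.mem_ker.mp hu)
  obtain ⟨W₀, hW₀⟩ := hVmem
  refine ⟨W₀ - ((LinearMap.ker K).orthogonalProjectionOnto W₀ : E), ?_, ?_⟩
  · rw [map_sub, hW₀]
    have hm : ((LinearMap.ker K).orthogonalProjectionOnto W₀ : E) ∈ LinearMap.ker K :=
      Submodule.coe_mem _
    rw [LinearMap.mem_ker] at hm
    rw [hm, sub_zero]
  · intro U hU
    have hWmem : W₀ - ((LinearMap.ker K).orthogonalProjectionOnto W₀ : E) ∈ (LinearMap.ker K)ᗮ :=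
      Submodule.sub_starProjection_mem_orthogonal (K := LinearMap.ker K) W₀
    rw [Submodule.mem_orthogonal] at hWmem
    have h0 := hWmem U (LinearMap.mem_ker.mpr hU)
    rw [← inner_conj_symm, h0, map_zero]

lemma grow_lemma [FiniteDimensional ℂ E] (K : E →ₗ[ℂ] E)
    (hsym : ∀ x y : E, ⟪K x, y⟫_ℂ = ⟪x, K y⟫_ℂ)
    (hpos : ∀ x : E, 0 ≤ (⟪x, K x⟫_ℂ).re)
    (V U : E) (hU : K U = 0) (hUV : ⟪U, V⟫_ℂ ≠ 0) (δ : ℝ) (hδ : 0 < δ) :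
    ENNReal.ofReal (‖⟪U, V⟫_ℂ‖ ^ 2 / ‖U‖ ^ 2 / δ)
      ≤ invQuad (K + (δ : ℂ) • (LinearMap.id : E →ₗ[ℂ] E)) V := by
  obtain ⟨Wd, hWd, hiq⟩ := exists_sol K hpos δ hδ V
  set L := K + (δ : ℂ) • (LinearMap.id : E →ₗ[ℂ] E) with hLdef
  rw [hiq]
  apply ENNReal.ofReal_le_ofReal
  set a := (⟪Wd, L Wd⟫_ℂ).re with ha
  have haeq : a = (⟪Wd, K Wd⟫_ℂ).re + δ * ‖Wd‖ ^ 2 := Lre K δ Wd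
  have hU0 : U ≠ 0 := by
    intro h0
    exact hUV (by rw [h0, inner_zero_left])
  have hUn : 0 < ‖U‖ := norm_pos_iff.mpr hU0
  -- ⟪U, V⟫ = δ • ⟪U, Wd⟫
  have hUVd : ⟪U, V⟫_ℂ = (δ : ℂ) * ⟪U, Wd⟫_ℂ := by
    rw [← hWd, ← Lsym K hsym δ]
    have hLU : L U = (δ : ℂ) • U := by
      show K U + (δ : ℂ) • U = (δ : ℂ) • U
      rw [hU, zero_add]
    rw [hLU, inner_smul_left, Complex.conj_ofReal]
  have hm : ‖⟪U, V⟫_ℂ‖ ≤ δ * (‖U‖ * ‖Wd‖) := by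
    rw [hUVd, norm_mul]
    have : ‖(δ : ℂ)‖ = δ := by
      rw [Complex.norm_real, Real.norm_of_nonneg hδ.le]
    rw [this]
    exact mul_le_mul_of_nonneg_left (norm_inner_le_norm _ _) hδ.le
  have hrpos := hpos Wd
  rw [div_div, div_le_iff₀ (by positivity)]
  have hmn : 0 ≤ ‖⟪U, V⟫_ℂ‖ := norm_nonneg _
  have hstep : δ * ‖Wd‖ ^ 2 * (‖U‖ ^ 2 * δ) ≤ a * (‖U‖ ^ 2 * δ) := by
    refine mul_le_mul_of_nonneg_right (by linarith) (by positivity)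
  nlinarith [mul_le_mul hm hm hmn (by positivity : (0:ℝ) ≤ δ * (‖U‖ * ‖Wd‖)), hstep]

end Aux

/-- For a positive semidefinite operator `K` on a finite-dimensional complex inner product
space and a vector `V`, the extended value satisfies
`⟨V, K⁻¹ V⟩ = sup_{δ > 0} ⟨V, (K + δ·I)⁻¹ V⟩` in `[0,∞]`. -/
theorem invQuad_eq_iSup_delta
    {E : Type*} [NormedAddCommGroup E] [InnerProductSpace ℂ E] [FiniteDimensional ℂ E]
    (K : E →ₗ[ℂ] E)
    (hsym : ∀ x y : E, ⟪K x, y⟫_ℂ = ⟪x, K y⟫_ℂ)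
    (hpos : ∀ x : E, 0 ≤ (⟪x, K x⟫_ℂ).re)
    (V : E) :
    invQuad K V =
      ⨆ (δ : ℝ) (_ : 0 < δ), invQuad (K + (δ : ℂ) • (LinearMap.id : E →ₗ[ℂ] E)) V := by
  by_cases hP : ∃ W, K W = V ∧ ∀ U, K U = 0 → ⟪W, U⟫_ℂ = 0
  · obtain ⟨W, hW, horth⟩ := hP
    rw [invQuad_eq K V W hW horth]
    set C := (⟪W, K W⟫_ℂ).re with hC
    have hC0 : 0 ≤ C := hpos W
    apply le_antisymm
    · apply ENNReal.le_of_forall_pos_le_add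
      intro ε hε _
      have hεpos : (0:ℝ) < (ε:ℝ) := hε
      set δ := (ε : ℝ) ^ 2 / (‖W‖ ^ 2 * C + 1) with hδdef
      have hδpos : 0 < δ := by positivity
      obtain ⟨a, hiq, ha0, haC, hsq⟩ := bound_lemma K hsym hpos V W hW δ hδpos
      have hδs : δ * (‖W‖ ^ 2 * C + 1) = (ε:ℝ) ^ 2 := by
        rw [hδdef]
        field_simp
      have hsq' : (C - a) ^ 2 ≤ (ε:ℝ) ^ 2 := by nlinarith [hsq, hδpos, hδs]
      have hCa : C ≤ a + ε := by nlinarith [hsq', hεpos]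
      calc ENNReal.ofReal C ≤ ENNReal.ofReal (a + (ε:ℝ)) := ENNReal.ofReal_le_ofReal hCa
        _ ≤ ENNReal.ofReal a + ENNReal.ofReal (ε:ℝ) := ENNReal.ofReal_add_le
        _ = ENNReal.ofReal a + (ε : ℝ≥0∞) := by rw [ENNReal.ofReal_coe_nnreal]
        _ ≤ (⨆ (δ : ℝ) (_ : 0 < δ),
              invQuad (K + (δ : ℂ) • (LinearMap.id : E →ₗ[ℂ] E)) V) + (ε : ℝ≥0∞) := by
            gcongr
            rw [← hiq]
            exact le_iSup₂ (f := fun (δ : ℝ) (_ : 0 < δ) =>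
              invQuad (K + (δ : ℂ) • (LinearMap.id : E →ₗ[ℂ] E)) V) δ hδpos
    · apply iSup₂_le
      intro δ hδ
      obtain ⟨a, hiq, ha0, haC, -⟩ := bound_lemma K hsym hpos V W hW δ hδ
      rw [hiq]
      exact ENNReal.ofReal_le_ofReal haC
  · have hKV : invQuad K V = ⊤ := dif_neg hP
    rw [hKV]
    obtain ⟨U, hU, hUV⟩ := exists_kernel_witness K hsym V hP
    symm
    rw [← top_le_iff, le_iSup_iff]
    intro b hb
    by_contra hcon
    have hbt : b ≠ ⊤ := by
      intro h
      exact hcon h.ge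
    set c := ‖⟪U, V⟫_ℂ‖ ^ 2 / ‖U‖ ^ 2 with hc
    have hc0 : 0 < c := by
      have h1 : 0 < ‖⟪U, V⟫_ℂ‖ := norm_pos_iff.mpr hUV
      have h2 : 0 < ‖U‖ := norm_pos_iff.mpr (fun h0 => hUV (by rw [h0, inner_zero_left]))
      exact div_pos (by positivity) (by positivity)
    set t := b.toReal with ht
    have ht0 : 0 ≤ t := ENNReal.toReal_nonneg
    have hδpos : 0 < c / (t + 1) := div_pos hc0 (by linarith)
    have hgrow := grow_lemma K hsym hpos V U hU hUV (c / (t + 1)) hδpos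
    have hcc : ‖⟪U, V⟫_ℂ‖ ^ 2 / ‖U‖ ^ 2 / (c / (t + 1)) = t + 1 := by
      rw [← hc]
      field_simp
    rw [hcc] at hgrow
    have hfb := hb (c / (t + 1))
    rw [iSup_pos hδpos] at hfb
    have hle : ENNReal.ofReal (t + 1) ≤ b := le_trans hgrow hfb
    have hlt : b < ENNReal.ofReal (t + 1) := by
      rw [ENNReal.lt_ofReal_iff_toReal_lt hbt]
      linarith
    exact absurd hle (not_le.mpr hlt)
end

section
/- For every positive semidefinite X ∈ M_n(ℂ) and α ∈ ℝ, the operator [X]_α is a positive self-adjoint operator on the Hilbert space (M_n(ℂ), ⟨·,·⟩): ⟨A, [X]_α A⟩ ≥ 0 for all A ∈ M_n(ℂ) and ⟨A, [X]_α B⟩ = ⟨[X]_α A, B⟩ for all A, B ∈ M_n(ℂ). Moreover, if X is positive definite, then [X]_α is invertible (positive definite). -/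
open MeasureTheory Matrix
open scoped ENNReal Classical ComplexOrder

noncomputable def Kker (α a b : ℝ) : ℝ :=
  ∫ s in (0:ℝ)..1, Real.exp (α * (s - 1/2)) * (a ^ s * b ^ (1 - s))

lemma Kker_integrable (α : ℝ) {a b : ℝ} (ha : 0 ≤ a) (hb : 0 ≤ b) :
    IntervalIntegrable (fun s => Real.exp (α * (s - 1/2)) * (a ^ s * b ^ (1 - s))) volume 0 1 := by
  rcases eq_or_lt_of_le ha with ha0 | ha0
  case inr =>
    rcases eq_or_lt_of_le hb with hb0 | hb0
    case inr =>
      have c1 : Continuous fun s : ℝ => a ^ s :=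
        Continuous.rpow continuous_const continuous_id fun _ => Or.inl (ne_of_gt ha0)
      have c2 : Continuous fun s : ℝ => b ^ (1 - s) :=
        Continuous.rpow continuous_const (continuous_const.sub continuous_id)
          fun _ => Or.inl (ne_of_gt hb0)
      exact ((Real.continuous_exp.comp (by continuity)).mul (c1.mul c2)).intervalIntegrable 0 1
    case inl =>
      -- b = 0
      have hz : ∀ s : ℝ, s ∉ ({0, 1} : Set ℝ) →
          (0:ℝ) = Real.exp (α * (s - 1/2)) * (a ^ s * b ^ (1 - s)) := by
        intro s hs
        simp only [Set.mem_insert_iff, Set.mem_singleton_iff, not_or] at hs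
        rw [← hb0, Real.zero_rpow (by intro h; exact hs.2 (by linarith [sub_eq_zero.mp h])), ]
        ring
      have hmeas : volume ({0, 1} : Set ℝ) = 0 :=
        (Set.Finite.insert 0 (Set.finite_singleton 1)).measure_zero volume
      have hae : (fun _ : ℝ => (0:ℝ)) =ᵐ[volume]
          fun s => Real.exp (α * (s - 1/2)) * (a ^ s * b ^ (1 - s)) := by
        rw [Filter.EventuallyEq, ae_iff]
        refine measure_mono_null ?_ hmeas
        intro s hs
        simp only [Set.mem_setOf_eq] at hs
        by_contra h
        exact hs (hz s h)
      exact (intervalIntegrable_const (c := (0:ℝ))).congr_ae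
        (hae.filter_mono (ae_mono Measure.restrict_le_self))
  case inl =>
    have hz : ∀ s : ℝ, s ∉ ({0, 1} : Set ℝ) →
        (0:ℝ) = Real.exp (α * (s - 1/2)) * (a ^ s * b ^ (1 - s)) := by
      intro s hs
      simp only [Set.mem_insert_iff, Set.mem_singleton_iff, not_or] at hs
      rw [← ha0, Real.zero_rpow hs.1]
      ring
    have hmeas : volume ({0, 1} : Set ℝ) = 0 :=
      (Set.Finite.insert 0 (Set.finite_singleton 1)).measure_zero volume
    have hae : (fun _ : ℝ => (0:ℝ)) =ᵐ[volume]
        fun s => Real.exp (α * (s - 1/2)) * (a ^ s * b ^ (1 - s)) := by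
      rw [Filter.EventuallyEq, ae_iff]
      refine measure_mono_null ?_ hmeas
      intro s hs
      simp only [Set.mem_setOf_eq] at hs
      by_contra h
      exact hs (hz s h)
    exact (intervalIntegrable_const (c := (0:ℝ))).congr_ae
      (hae.filter_mono (ae_mono Measure.restrict_le_self))

lemma Kker_nonneg (α : ℝ) {a b : ℝ} (ha : 0 ≤ a) (hb : 0 ≤ b) : 0 ≤ Kker α a b :=
  intervalIntegral.integral_nonneg zero_le_one fun u _ =>
    mul_nonneg (Real.exp_pos _).le
      (mul_nonneg (Real.rpow_nonneg ha _) (Real.rpow_nonneg hb _))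

lemma Kker_pos (α : ℝ) {a b : ℝ} (ha : 0 < a) (hb : 0 < b) : 0 < Kker α a b :=
  intervalIntegral.intervalIntegral_pos_of_pos (Kker_integrable α ha.le hb.le)
    (fun x => mul_pos (Real.exp_pos _)
      (mul_pos (Real.rpow_pos_of_pos ha _) (Real.rpow_pos_of_pos hb _))) zero_lt_one

lemma Kker_smul_integrable (α : ℝ) {a b : ℝ} (ha : 0 ≤ a) (hb : 0 ≤ b) (c : ℂ) :
    IntervalIntegrable (fun s => (Real.exp (α * (s - 1/2)) * (a ^ s * b ^ (1 - s))) • c)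
      volume 0 1 := by
  rw [intervalIntegrable_iff] at *
  exact ((Kker_integrable α ha hb).def').smul_const c

lemma sandwich_repr_aux {N : Type*} [Fintype N] [DecidableEq N]
    (X : Matrix N N ℂ) (α : ℝ) (A : Matrix N N ℂ)
    (U : Matrix N N ℂ) (lam : N → ℝ) (hlam : ∀ i, 0 ≤ lam i)
    (hmp : ∀ s : ℝ, mpow X s = U * Matrix.diagonal (fun i => ((lam i ^ s : ℝ) : ℂ)) * star U) :
    sandwich X α A =
      U * Matrix.of (fun i j => ((Kker α (lam i) (lam j) : ℝ) : ℂ) * (star U * A * U) i j) *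
        star U := by
  have key : ∀ s : ℝ, mpow X s * A * mpow X (1 - s) =
      U * Matrix.of (fun i j => ((lam i ^ s * lam j ^ (1 - s) : ℝ) : ℂ) * (star U * A * U) i j) *
        star U := by
    intro s
    rw [hmp s, hmp (1 - s)]
    have hD : Matrix.diagonal (fun i => ((lam i ^ s : ℝ) : ℂ)) * (star U * A * U) *
        Matrix.diagonal (fun j => ((lam j ^ (1 - s) : ℝ) : ℂ)) =
        Matrix.of (fun i j => ((lam i ^ s * lam j ^ (1 - s) : ℝ) : ℂ) * (star U * A * U) i j) := by
      ext i j
      simp only [Matrix.mul_apply, Matrix.diagonal_apply, Matrix.of_apply, ite_mul, zero_mul,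
        mul_ite, mul_zero, Finset.sum_ite_eq, Finset.sum_ite_eq', Finset.mem_univ, if_pos]
      push_cast
      ring
    rw [← hD]
    simp only [Matrix.mul_assoc]
  ext p q
  show (∫ s in (0:ℝ)..1, Real.exp (α * (s - 1/2)) • ((mpow X s * A * mpow X (1 - s)) p q)) = _
  have h1 : ∀ s : ℝ, Real.exp (α * (s - 1/2)) • ((mpow X s * A * mpow X (1 - s)) p q)
      = ∑ j : N, ∑ i : N,
          (Real.exp (α * (s - 1/2)) * (lam i ^ s * lam j ^ (1 - s))) •
            (U p i * (star U * A * U) i j * (star U) j q) := by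
    intro s
    rw [key s]
    simp only [Matrix.mul_apply, Matrix.of_apply, Finset.sum_mul, Finset.smul_sum]
    refine Finset.sum_congr rfl fun j _ => Finset.sum_congr rfl fun i _ => ?_
    simp only [Complex.real_smul]
    push_cast
    ring
  have hfe : (fun s : ℝ => Real.exp (α * (s - 1/2)) • ((mpow X s * A * mpow X (1 - s)) p q))
      = fun s : ℝ => ∑ j : N, ∑ i : N,
          (Real.exp (α * (s - 1/2)) * (lam i ^ s * lam j ^ (1 - s))) •
            (U p i * (star U * A * U) i j * (star U) j q) := funext h1
  conv_lhs => rw [hfe]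
  rw [intervalIntegral.integral_finset_sum]
  swap
  · intro j _
    have hs := IntervalIntegrable.sum (μ := volume) (a := (0:ℝ)) (b := 1) Finset.univ
      (f := fun i s => (Real.exp (α * (s - 1/2)) * (lam i ^ s * lam j ^ (1 - s))) •
        (U p i * (star U * A * U) i j * (star U) j q))
      (fun i _ => Kker_smul_integrable α (hlam i) (hlam j) _)
    rwa [Finset.sum_fn] at hs
  have h2 : ∀ j : N, (∫ s in (0:ℝ)..1, ∑ i : N,
      (Real.exp (α * (s - 1/2)) * (lam i ^ s * lam j ^ (1 - s))) •
        (U p i * (star U * A * U) i j * (star U) j q))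
      = ∑ i : N, ((Kker α (lam i) (lam j) : ℝ) : ℂ) *
          (U p i * (star U * A * U) i j * (star U) j q) := by
    intro j
    rw [intervalIntegral.integral_finset_sum]
    · refine Finset.sum_congr rfl fun i _ => ?_
      rw [intervalIntegral.integral_smul_const, Complex.real_smul]
      rfl
    · intro i _
      exact Kker_smul_integrable α (hlam i) (hlam j) _
  simp only [h2]
  show _ = (U * Matrix.of (fun i j => ((Kker α (lam i) (lam j) : ℝ) : ℂ) *
      (star U * A * U) i j) * star U) p q
  simp only [Matrix.mul_apply, Matrix.of_apply, Finset.sum_mul]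
  refine Finset.sum_congr rfl fun j _ => Finset.sum_congr rfl fun i _ => ?_
  ring

lemma gns_eq_sum {N : Type*} [Fintype N] (A B : Matrix N N ℂ) :
    gns A B = (∑ i : N, ∑ j : N, star (A j i) * B j i) / (Fintype.card N) := by
  simp [gns, tau, Matrix.trace, Matrix.diag, Matrix.mul_apply, Matrix.conjTranspose_apply]

lemma matrix_conj_cancel₁ {N : Type*} [Fintype N] [DecidableEq N] {U : Matrix N N ℂ}
    (hU1 : star U * U = 1) (M : Matrix N N ℂ) :
    star U * (U * M * star U) * U = M := by
  calc star U * (U * M * star U) * U = (star U * U) * M * (star U * U) := by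
        simp only [Matrix.mul_assoc]
    _ = M := by rw [hU1, Matrix.one_mul, Matrix.mul_one]

lemma matrix_conj_cancel₂ {N : Type*} [Fintype N] [DecidableEq N] {U : Matrix N N ℂ}
    (hU2 : U * star U = 1) (M : Matrix N N ℂ) :
    U * (star U * M * U) * star U = M := by
  calc U * (star U * M * U) * star U = (U * star U) * M * (U * star U) := by
        simp only [Matrix.mul_assoc]
    _ = M := by rw [hU2, Matrix.one_mul, Matrix.mul_one]

lemma gns_unitary {N : Type*} [Fintype N] [DecidableEq N] (U : Matrix N N ℂ)
    (hU2 : U * star U = 1) (A B : Matrix N N ℂ) :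
    gns (star U * A * U) (star U * B * U) = gns A B := by
  unfold gns tau
  congr 1
  have h1 : (star U * A * U)ᴴ = star U * Aᴴ * U := by
    rw [Matrix.conjTranspose_mul, Matrix.conjTranspose_mul,
      ← Matrix.star_eq_conjTranspose U, ← Matrix.star_eq_conjTranspose (star U), star_star,
      Matrix.mul_assoc]
  rw [h1]
  have h2 : star U * Aᴴ * U * (star U * B * U) = star U * (Aᴴ * B) * U := by
    calc star U * Aᴴ * U * (star U * B * U)
        = star U * Aᴴ * (U * star U) * B * U := by simp only [Matrix.mul_assoc]
      _ = star U * (Aᴴ * B) * U := by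
          rw [hU2, Matrix.mul_one]; simp only [Matrix.mul_assoc]
  rw [h2, Matrix.trace_mul_cycle, ← Matrix.mul_assoc, hU2, Matrix.one_mul]

/-- **Positivity and self-adjointness of `[X]_α`.**  For positive semidefinite `X`, the
operator `[X]_α` is positive and self-adjoint on the Hilbert space `(M_n(ℂ), ⟨·,·⟩)`;
moreover if `X` is positive definite, then `[X]_α` is invertible (positive definite). -/
theorem sandwich_posSelfAdjoint {N : Type*} [Fintype N] [DecidableEq N]
    (X : Matrix N N ℂ) (hX : X.PosSemidef) (α : ℝ) :
    (∀ A : Matrix N N ℂ, 0 ≤ (gns A (sandwich X α A)).re ∧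
      (gns A (sandwich X α A)).im = 0) ∧
    (∀ A B : Matrix N N ℂ, gns A (sandwich X α B) = gns (sandwich X α A) B) ∧
    (X.PosDef → Function.Bijective (fun A : Matrix N N ℂ => sandwich X α A) ∧
      ∀ A : Matrix N N ℂ, A ≠ 0 → 0 < (gns A (sandwich X α A)).re) := by
  classical
  obtain ⟨U, lam, hlamnn, hU1, hU2, hmp, hlampos⟩ :
      ∃ (U : Matrix N N ℂ) (lam : N → ℝ),
        (∀ i, 0 ≤ lam i) ∧ (star U * U = 1) ∧ (U * star U = 1) ∧
        (∀ s : ℝ, mpow X s =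
          U * Matrix.diagonal (fun i => ((lam i ^ s : ℝ) : ℂ)) * star U) ∧
        (X.PosDef → ∀ i, 0 < lam i) := by
    refine ⟨(hX.1.eigenvectorUnitary : Matrix N N ℂ), hX.1.eigenvalues,
      fun i => hX.eigenvalues_nonneg i, ?_, ?_, ?_, ?_⟩
    · exact hX.1.eigenvectorUnitary.2.1
    · exact hX.1.eigenvectorUnitary.2.2
    · intro s
      simp only [mpow, dif_pos hX.1]
    · intro hPD i
      exact hPD.eigenvalues_pos i
  have hrepr : ∀ A : Matrix N N ℂ, sandwich X α A =
      U * Matrix.of (fun i j => ((Kker α (lam i) (lam j) : ℝ) : ℂ) * (star U * A * U) i j) *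
        star U := fun A => sandwich_repr_aux X α A U lam hlamnn hmp
  have hKnn : ∀ i j, 0 ≤ Kker α (lam i) (lam j) :=
    fun i j => Kker_nonneg α (hlamnn i) (hlamnn j)
  have hgnsL : ∀ A B : Matrix N N ℂ, gns A (sandwich X α B) =
      (∑ i : N, ∑ j : N, star ((star U * A * U) j i) *
        (((Kker α (lam j) (lam i) : ℝ) : ℂ) * (star U * B * U) j i)) / (Fintype.card N) := by
    intro A B
    rw [← gns_unitary U hU2 A (sandwich X α B), hrepr B, matrix_conj_cancel₁ hU1, gns_eq_sum]
    simp only [Matrix.of_apply]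
  have hgnsR : ∀ A B : Matrix N N ℂ, gns (sandwich X α A) B =
      (∑ i : N, ∑ j : N, star (((Kker α (lam j) (lam i) : ℝ) : ℂ) * (star U * A * U) j i) *
        ((star U * B * U) j i)) / (Fintype.card N) := by
    intro A B
    rw [← gns_unitary U hU2 (sandwich X α A) B, hrepr A, matrix_conj_cancel₁ hU1, gns_eq_sum]
    simp only [Matrix.of_apply]
  have hreal : ∀ A : Matrix N N ℂ, gns A (sandwich X α A) =
      (((∑ i : N, ∑ j : N, Kker α (lam j) (lam i) *
        Complex.normSq ((star U * A * U) j i)) / (Fintype.card N) : ℝ) : ℂ) := by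
    intro A
    rw [hgnsL A A]
    push_cast
    congr 1
    refine Finset.sum_congr rfl fun i _ => Finset.sum_congr rfl fun j _ => ?_
    rw [Complex.normSq_eq_conj_mul_self, Complex.star_def]
    ring
  refine ⟨fun A => ?_, fun A B => ?_, fun hPD => ?_⟩
  · rw [hreal A]
    refine ⟨?_, Complex.ofReal_im _⟩
    rw [Complex.ofReal_re]
    refine div_nonneg ?_ (Nat.cast_nonneg _)
    exact Finset.sum_nonneg fun i _ => Finset.sum_nonneg fun j _ =>
      mul_nonneg (hKnn j i) (Complex.normSq_nonneg _)
  · rw [hgnsL A B, hgnsR A B]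
    congr 1
    refine Finset.sum_congr rfl fun i _ => Finset.sum_congr rfl fun j _ => ?_
    rw [star_mul', Complex.star_def, Complex.conj_ofReal]
    ring
  · have hKpos : ∀ i j, 0 < Kker α (lam i) (lam j) := fun i j =>
      Kker_pos α (hlampos hPD i) (hlampos hPD j)
    have hstrict : ∀ A : Matrix N N ℂ, A ≠ 0 → 0 < (gns A (sandwich X α A)).re := by
      intro A hA
      rw [hreal A, Complex.ofReal_re]
      have hA' : star U * A * U ≠ 0 := by
        intro h
        exact hA (by rw [← matrix_conj_cancel₂ hU2 A, h, Matrix.mul_zero, Matrix.zero_mul])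
      obtain ⟨p, q, hpq⟩ : ∃ p q, (star U * A * U) p q ≠ 0 := by
        by_contra hc
        push_neg at hc
        exact hA' (Matrix.ext fun p q => hc p q)
      have hNE : Nonempty N := ⟨p⟩
      have hcard : 0 < (Fintype.card N : ℝ) := by exact_mod_cast Fintype.card_pos
      refine div_pos ?_ hcard
      refine Finset.sum_pos' (fun i _ => Finset.sum_nonneg fun j _ =>
        mul_nonneg (hKpos j i).le (Complex.normSq_nonneg _)) ⟨q, Finset.mem_univ q, ?_⟩
      exact Finset.sum_pos' (fun j _ => mul_nonneg (hKpos j q).le (Complex.normSq_nonneg _))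
        ⟨p, Finset.mem_univ p, mul_pos (hKpos p q) (Complex.normSq_pos.mpr hpq)⟩
    refine ⟨?_, hstrict⟩
    have hK0 : ∀ i j, ((Kker α (lam i) (lam j) : ℝ) : ℂ) ≠ 0 := fun i j =>
      Complex.ofReal_ne_zero.mpr (hKpos i j).ne'
    set g : Matrix N N ℂ → Matrix N N ℂ := fun A =>
      U * Matrix.of (fun i j => (((Kker α (lam i) (lam j) : ℝ) : ℂ))⁻¹ *
        (star U * A * U) i j) * star U with hg
    have hcanc1 : ∀ (i j : N) (x : ℂ),
        (((Kker α (lam i) (lam j) : ℝ) : ℂ))⁻¹ * ((((Kker α (lam i) (lam j) : ℝ) : ℂ)) * x) = x :=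
      fun i j x => inv_mul_cancel_left₀ (hK0 i j) x
    have hcanc2 : ∀ (i j : N) (x : ℂ),
        (((Kker α (lam i) (lam j) : ℝ) : ℂ)) * ((((Kker α (lam i) (lam j) : ℝ) : ℂ))⁻¹ * x) = x :=
      fun i j x => mul_inv_cancel_left₀ (hK0 i j) x
    have hgl : ∀ A : Matrix N N ℂ, g (sandwich X α A) = A := by
      intro A
      simp only [hg, hrepr, matrix_conj_cancel₁ hU1, Matrix.of_apply, hcanc1]
      exact matrix_conj_cancel₂ hU2 A
    have hgr : ∀ A : Matrix N N ℂ, sandwich X α (g A) = A := by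
      intro A
      rw [hrepr (g A)]
      simp only [hg, matrix_conj_cancel₁ hU1, Matrix.of_apply, hcanc2]
      exact matrix_conj_cancel₂ hU2 A
    exact Function.bijective_iff_has_inverse.mpr ⟨g, hgl, hgr⟩
end
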